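/- arXiv:0710.0082 — 3 statements merged into one kernel-verified Lean document; each statement's English description precedes it below -/
import Mathlib

section
/- Let C be a monoidal category and A a monoid object in C whose multiplication μ : A ⊗ A → A is an isomorphism. Then for any two left A-modules M and N and any morphism f : M → N between their underlying objects in C, f automatically commutes with the actions, i.e. (A ◁ f) ≫ ξ_N = ξ_M ≫ f; consequently the forgetful functor from the category of left A-modules (Mod_ A) to C is fully faithful, so left A-modules form a full subcategory of C. -/
open CategoryTheory Category MonoidalCategory

/-- If the multiplication of a monoid object `A` in a monoidal category is an isomorphism,
then any morphism between the underlying objects of two left `A`-modules automatically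
commutes with the actions, and consequently the forgetful functor `Mod_ A ⥤ C` is full and
faithful, i.e. left `A`-modules form a full subcategory of `C`. -/
theorem mod_forget_fullyFaithful {C : Type*} [Category C] [MonoidalCategory C]
    (A : Mon C) [IsIso (MonObj.mul (X := A.X))] :
    (∀ (M N : Mod C A.X) (f : M.X ⟶ N.X),
      (A.X ◁ f) ≫ ModObj.smul (M := A.X) (X := N.X) = ModObj.smul (M := A.X) (X := M.X) ≫ f) ∧
      (Mod.forget (D := C) A.X).Full ∧ (Mod.forget (D := C) A.X).Faithful := by
  -- Step 1: from μ mono, ρ⁻¹ ≫ (A ◁ η) = λ⁻¹ ≫ (η ▷ A).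
  have hstar : (ρ_ A.X).inv ≫ (A.X ◁ MonObj.one (X := A.X)) = (λ_ A.X).inv ≫ (MonObj.one (X := A.X) ▷ A.X) := by
    rw [← cancel_mono MonObj.mul (X := A.X)]
    simp [MonObj.one_mul A.X, MonObj.mul_one A.X]
  -- Step 2 ("idempotency" at M): λ⁻¹ ≫ (η ▷ (A ⊗ M)) = (A ◁ λ⁻¹) ≫ (A ◁ (η ▷ M)).
  have key2 : ∀ (M : Mod C A.X),
      (λ_ (A.X ⊗ M.X)).inv ≫ (MonObj.one (X := A.X) ▷ (A.X ⊗ M.X)) =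
        (A.X ◁ (λ_ M.X).inv) ≫ (A.X ◁ (MonObj.one (X := A.X) ▷ M.X)) := by
    intro M
    calc (λ_ (A.X ⊗ M.X)).inv ≫ (MonObj.one (X := A.X) ▷ (A.X ⊗ M.X))
        = ((λ_ A.X).inv ▷ M.X) ≫ (α_ (𝟙_ C) A.X M.X).hom ≫ (MonObj.one (X := A.X) ▷ (A.X ⊗ M.X)) := by
          rw [leftUnitor_tensor_inv, assoc]
      _ = ((λ_ A.X).inv ▷ M.X) ≫ ((MonObj.one (X := A.X) ▷ A.X) ▷ M.X) ≫ (α_ A.X A.X M.X).hom := by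
          rw [associator_naturality_left]
      _ = (((λ_ A.X).inv ≫ (MonObj.one (X := A.X) ▷ A.X)) ▷ M.X) ≫ (α_ A.X A.X M.X).hom := by
          rw [comp_whiskerRight, assoc]
      _ = (((ρ_ A.X).inv ≫ (A.X ◁ MonObj.one (X := A.X))) ▷ M.X) ≫ (α_ A.X A.X M.X).hom := by rw [hstar]
      _ = ((ρ_ A.X).inv ▷ M.X) ≫ ((A.X ◁ MonObj.one (X := A.X)) ▷ M.X) ≫ (α_ A.X A.X M.X).hom := by
          rw [comp_whiskerRight, assoc]
      _ = ((ρ_ A.X).inv ▷ M.X) ≫ (α_ A.X (𝟙_ C) M.X).hom ≫ (A.X ◁ (MonObj.one (X := A.X) ▷ M.X)) := by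
          rw [associator_naturality_middle]
      _ = (A.X ◁ (λ_ M.X).inv) ≫ (A.X ◁ (MonObj.one (X := A.X) ▷ M.X)) := by
          rw [← assoc]
          congr 1
          rw [← cancel_mono (A.X ◁ (λ_ M.X).hom)]
          simp [triangle]
  -- Step 3: the action is (split) invertible, with inverse λ⁻¹ ≫ (η ▷ M).
  have key : ∀ (M : Mod C A.X), ModObj.smul (M := A.X) (X := M.X) ≫ (λ_ M.X).inv ≫ (MonObj.one (X := A.X) ▷ M.X) = 𝟙 (A.X ⊗ M.X) := by
    intro M
    calc ModObj.smul (M := A.X) (X := M.X) ≫ (λ_ M.X).inv ≫ (MonObj.one (X := A.X) ▷ M.X)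
        = (λ_ (A.X ⊗ M.X)).inv ≫ ((𝟙_ C) ◁ ModObj.smul (M := A.X) (X := M.X)) ≫ (MonObj.one (X := A.X) ▷ M.X) := by
          rw [leftUnitor_inv_naturality_assoc]; rfl
      _ = (λ_ (A.X ⊗ M.X)).inv ≫ (MonObj.one (X := A.X) ▷ (A.X ⊗ M.X)) ≫ (A.X ◁ ModObj.smul (M := A.X) (X := M.X)) := by
          rw [whisker_exchange]
      _ = (A.X ◁ (λ_ M.X).inv) ≫ (A.X ◁ (MonObj.one (X := A.X) ▷ M.X)) ≫ (A.X ◁ ModObj.smul (M := A.X) (X := M.X)) := by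
          rw [← assoc, key2, assoc]
      _ = A.X ◁ ((λ_ M.X).inv ≫ (MonObj.one (X := A.X) ▷ M.X) ≫ ModObj.smul (M := A.X) (X := M.X)) := by
          simp only [MonoidalCategory.whiskerLeft_comp, assoc]
      _ = 𝟙 (A.X ⊗ M.X) := by rw [ModObj.one_smul_self A.X M.X]; simp
  -- Step 4: any morphism of underlying objects commutes with the actions.
  have main : ∀ (M N : Mod C A.X) (f : M.X ⟶ N.X), (A.X ◁ f) ≫ ModObj.smul (M := A.X) (X := N.X) = ModObj.smul (M := A.X) (X := M.X) ≫ f := by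
    intro M N f
    have h : ((λ_ M.X).inv ≫ (MonObj.one (X := A.X) ▷ M.X)) ≫ (A.X ◁ f) ≫ ModObj.smul (M := A.X) (X := N.X) = f := by
      calc ((λ_ M.X).inv ≫ (MonObj.one (X := A.X) ▷ M.X)) ≫ (A.X ◁ f) ≫ ModObj.smul (M := A.X) (X := N.X)
          = (λ_ M.X).inv ≫ ((𝟙_ C) ◁ f) ≫ (MonObj.one (X := A.X) ▷ N.X) ≫ ModObj.smul (M := A.X) (X := N.X) := by
            rw [assoc, ← whisker_exchange_assoc]
        _ = (λ_ M.X).inv ≫ ((𝟙_ C) ◁ f) ≫ (λ_ N.X).hom := by rw [ModObj.one_smul_self A.X N.X]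
        _ = f := by simp
    calc (A.X ◁ f) ≫ ModObj.smul (M := A.X) (X := N.X)
        = (ModObj.smul (M := A.X) (X := M.X) ≫ (λ_ M.X).inv ≫ (MonObj.one (X := A.X) ▷ M.X)) ≫ (A.X ◁ f) ≫ ModObj.smul (M := A.X) (X := N.X) := by
          rw [key M]; exact (id_comp _).symm
      _ = ModObj.smul (M := A.X) (X := M.X) ≫ f := by rw [assoc, h]
  refine ⟨main, ⟨fun {M N} f => ⟨{ hom := f, isModHom := ⟨(main M N f).symm⟩ }, rfl⟩⟩, ⟨fun {M N} f g hfg => ?_⟩⟩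
  ext
  exact hfg
end

section
/- Let C be a monoidal category and A a monoid object in C whose multiplication μ : A ⊗ A → A is an isomorphism. Let (M, ξ_M) be a left A-module and (N, ξ_N) a right A-module. Then the two morphisms (N ⊗ A) ⊗ M → N ⊗ M given by ξ_N ▷ M and by α_{N,A,M} ≫ (N ◁ ξ_M) coincide. -/
open CategoryTheory Category MonoidalCategory

/-- If the multiplication of a monoid object `A` in a monoidal category is an isomorphism,
`M` is a left `A`-module, and `(N, ξN)` is a right `A`-module, then the two morphisms
`(N ⊗ A) ⊗ M ⟶ N ⊗ M`, namely `ξN ▷ M` and `α ≫ (N ◁ ξM)`, coincide. -/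
theorem right_act_tensor_left_act_eq {C : Type*} [Category C] [MonoidalCategory C]
    (A : Mon C) [IsIso (MonObj.mul (X := A.X))] (M : Mod C A.X)
    (N : C) (ξN : N ⊗ A.X ⟶ N)
    (hunit : (N ◁ MonObj.one (X := A.X)) ≫ ξN = (ρ_ N).hom)
    (hassoc : (α_ N A.X A.X).hom ≫ (N ◁ MonObj.mul (X := A.X)) ≫ ξN = (ξN ▷ A.X) ≫ ξN) :
    ξN ▷ M.X = (α_ N A.X M.X).hom ≫ (N ◁ ModObj.smul (M := A.X) (X := M.X)) := by
  -- the unit-insertion section of the action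
  set s : M.X ⟶ A.X ⊗ M.X := (λ_ M.X).inv ≫ (MonObj.one (X := A.X) ▷ M.X) with hs_def
  have hs : s ≫ ModObj.smul (M := A.X) (X := M.X) = 𝟙 M.X := by simp [hs_def]
  -- μ⁻¹ expressed via the unit
  have hmu : MonObj.one (X := A.X) ▷ A.X = (λ_ A.X).hom ≫ inv (MonObj.mul (X := A.X)) := by
    rw [← MonObj.one_mul A.X]; simp
  -- p := act ≫ s equals (μ⁻¹ ▷ M) ≫ α ≫ (A ◁ act)
  have hp : ModObj.smul (M := A.X) (X := M.X) ≫ s =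
      (inv (MonObj.mul (X := A.X)) ▷ M.X) ≫ (α_ A.X A.X M.X).hom ≫ (A.X ◁ ModObj.smul (M := A.X) (X := M.X)) := by
    have h1 : ModObj.smul (M := A.X) (X := M.X) ≫ (λ_ M.X).inv = (λ_ (A.X ⊗ M.X)).inv ≫ (𝟙_ C ◁ ModObj.smul (M := A.X) (X := M.X)) := by simp
    have h3 : (λ_ (A.X ⊗ M.X)).inv ≫ (MonObj.one (X := A.X) ▷ (A.X ⊗ M.X)) =
        (inv (MonObj.mul (X := A.X)) ▷ M.X) ≫ (α_ A.X A.X M.X).hom := by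
      rw [whiskerRight_tensor, hmu, comp_whiskerRight, leftUnitor_tensor_inv]
      simp
    rw [hs_def, reassoc_of% h1, whisker_exchange, reassoc_of% h3]
  -- p is idempotent
  have hidem : (ModObj.smul (M := A.X) (X := M.X) ≫ s) ≫ (ModObj.smul (M := A.X) (X := M.X) ≫ s) = ModObj.smul (M := A.X) (X := M.X) ≫ s := by
    rw [assoc, ← assoc s, hs, id_comp]
  -- p has a left inverse, hence p = id
  have hmm : (MonObj.mul (X := A.X) ▷ M.X) ≫ (inv (MonObj.mul (X := A.X)) ▷ M.X) = 𝟙 _ := by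
    rw [← comp_whiskerRight, IsIso.hom_inv_id, id_whiskerRight]
  have ht : ((A.X ◁ s) ≫ (α_ A.X A.X M.X).inv ≫ (MonObj.mul (X := A.X) ▷ M.X)) ≫ (ModObj.smul (M := A.X) (X := M.X) ≫ s) = 𝟙 _ := by
    rw [hp]
    simp only [assoc, reassoc_of% hmm, Iso.inv_hom_id_assoc]
    rw [← MonoidalCategory.whiskerLeft_comp, hs, MonoidalCategory.whiskerLeft_id]
  have hpid : ModObj.smul (M := A.X) (X := M.X) ≫ s = 𝟙 (A.X ⊗ M.X) := by
    calc ModObj.smul (M := A.X) (X := M.X) ≫ s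
        = (((A.X ◁ s) ≫ (α_ A.X A.X M.X).inv ≫ (MonObj.mul (X := A.X) ▷ M.X)) ≫ (ModObj.smul (M := A.X) (X := M.X) ≫ s)) ≫ (ModObj.smul (M := A.X) (X := M.X) ≫ s) := by
          rw [ht, id_comp]
      _ = ((A.X ◁ s) ≫ (α_ A.X A.X M.X).inv ≫ (MonObj.mul (X := A.X) ▷ M.X)) ≫ ((ModObj.smul (M := A.X) (X := M.X) ≫ s) ≫ (ModObj.smul (M := A.X) (X := M.X) ≫ s)) := by
          simp only [assoc]
      _ = ((A.X ◁ s) ≫ (α_ A.X A.X M.X).inv ≫ (MonObj.mul (X := A.X) ▷ M.X)) ≫ (ModObj.smul (M := A.X) (X := M.X) ≫ s) := by rw [hidem]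
      _ = 𝟙 _ := ht
  -- the key coherence computation (uses only hunit)
  have key : (N ◁ s) ≫ (α_ N A.X M.X).inv ≫ (ξN ▷ M.X) = 𝟙 (N ⊗ M.X) := by
    rw [hs_def, MonoidalCategory.whiskerLeft_comp, assoc]
    have h1 : (N ◁ (MonObj.one (X := A.X) ▷ M.X)) ≫ (α_ N A.X M.X).inv =
        (α_ N (𝟙_ C) M.X).inv ≫ ((N ◁ MonObj.one (X := A.X)) ▷ M.X) := by simp
    rw [reassoc_of% h1]
    have h2 : ((N ◁ MonObj.one (X := A.X)) ▷ M.X) ≫ (ξN ▷ M.X) = (ρ_ N).hom ▷ M.X := by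
      rw [← comp_whiskerRight, hunit]
    rw [h2]
    simp
  -- conclude
  calc ξN ▷ M.X
      = (α_ N A.X M.X).hom ≫ (N ◁ (ModObj.smul (M := A.X) (X := M.X) ≫ s)) ≫ (α_ N A.X M.X).inv ≫ (ξN ▷ M.X) := by
        rw [hpid]; simp
    _ = (α_ N A.X M.X).hom ≫ (N ◁ ModObj.smul (M := A.X) (X := M.X)) ≫ ((N ◁ s) ≫ (α_ N A.X M.X).inv ≫ (ξN ▷ M.X)) := by
        rw [MonoidalCategory.whiskerLeft_comp]; simp only [assoc]
    _ = (α_ N A.X M.X).hom ≫ (N ◁ ModObj.smul (M := A.X) (X := M.X)) := by rw [key, comp_id]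
end

section
/- Let C be a symmetric monoidal closed category with all small limits and colimits and terminal object t, and let a, b, c be pointed objects of C. Then hom_*(a, hom_*(b, c)) is a pullback of the cospan [a ⊗ b, c] → [(a ⊗ t) ⨿ (t ⊗ b), c] ← t, where the first leg is induced by the canonical morphism (a ⊗ t) ⨿ (t ⊗ b) → a ⊗ b with components id_a ⊗ pt_b and pt_a ⊗ id_b, and the second leg is adjoint to the morphism ((a ⊗ t) ⨿ (t ⊗ b)) ⊗ t → c that factors through t followed by pt_c. -/
set_option linter.unusedSectionVars false
open CategoryTheory CategoryTheory.Limits CategoryTheory.MonoidalCategory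
  CategoryTheory.MonoidalClosed

universe v u

namespace BasedObjects

variable {C : Type u} [Category.{v} C] [MonoidalCategory C] [SymmetricCategory C]
  [MonoidalClosed C] [HasLimits C] [HasColimits C]

/-- The object `(a ⊗ t) ⨿ (t ⊗ b)` appearing in the definition of the smash product of
pointed objects `a` and `b`. -/
noncomputable def wedgeObj (a b : Under (⊤_ C)) : C :=
  (a.right ⊗ (⊤_ C : C)) ⨿ ((⊤_ C : C) ⊗ b.right)

/-- The canonical morphism `(a ⊗ t) ⨿ (t ⊗ b) ⟶ a ⊗ b` with components `id_a ⊗ pt_b` and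
`pt_a ⊗ id_b`. -/
noncomputable def wedgeMap (a b : Under (⊤_ C)) : wedgeObj a b ⟶ a.right ⊗ b.right :=
  coprod.desc (a.right ◁ b.hom) (a.hom ▷ b.right)

/-- The smash product of pointed objects: the pushout of
`t ⟵ (a ⊗ t) ⨿ (t ⊗ b) ⟶ a ⊗ b`, pointed by the coprojection from `t`. -/
noncomputable def smash (a b : Under (⊤_ C)) : Under (⊤_ C) :=
  Under.mk (pushout.inr (wedgeMap a b) (terminal.from (wedgeObj a b)))

/-- Functoriality of the smash product of pointed objects. -/
noncomputable def smashMap {a a' b b' : Under (⊤_ C)} (f : a ⟶ a') (g : b ⟶ b') :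
    smash a b ⟶ smash a' b' :=
  Under.homMk
    (pushout.map (wedgeMap a b) (terminal.from (wedgeObj a b))
      (wedgeMap a' b') (terminal.from (wedgeObj a' b'))
      (f.right ⊗ₘ g.right) (𝟙 (⊤_ C))
      (coprod.map (f.right ▷ (⊤_ C : C)) ((⊤_ C : C) ◁ g.right))
      (by
        dsimp only [wedgeMap, wedgeObj]
        apply coprod.hom_ext
        · rw [coprod.inl_desc_assoc, coprod.map_desc, coprod.inl_desc,
            MonoidalCategory.tensorHom_def, whisker_exchange_assoc, ← MonoidalCategory.whiskerLeft_comp,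
            Under.w g]
        · rw [coprod.inr_desc_assoc, coprod.map_desc, coprod.inr_desc,
            MonoidalCategory.tensorHom_def', ← whisker_exchange_assoc, ← comp_whiskerRight,
            Under.w f])
      (Subsingleton.elim _ _))
    (by dsimp [smash]; erw [pushout.inr_desc, Category.id_comp])

/-- Any two morphisms into an internal hom object of the form `[A, t]`, with `t` terminal,
agree. -/
theorem hom_to_ihom_terminal_ext {A X : C} (f g : X ⟶ (ihom A).obj (⊤_ C : C)) : f = g :=
  uncurry_injective (Subsingleton.elim _ _)

/-- The canonical isomorphism `t ≅ [A, t]`, witnessing that the internal hom out of `A`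
preserves the terminal object. -/
noncomputable def ihomTermIso (A : C) : (⊤_ C : C) ≅ (ihom A).obj (⊤_ C : C) where
  hom := curry (terminal.from _)
  inv := terminal.from _
  hom_inv_id := Subsingleton.elim _ _
  inv_hom_id := hom_to_ihom_terminal_ext _ _

/-- The morphism `t ⟶ [A, b]` adjoint to the composite `A ⊗ t ⟶ t ⟶ b` of the canonical
morphism to the terminal object followed by the basepoint of `b`. -/
noncomputable def pointLeg (A : C) (b : Under (⊤_ C)) :
    (⊤_ C : C) ⟶ (ihom A).obj b.right :=
  curry (terminal.from (A ⊗ (⊤_ C : C)) ≫ b.hom)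

/-- The composite `t ≅ [a, t] ⟶ [a, b]`, the first component of the basepoint of the based
hom object. -/
noncomputable def basedHomPointFst (a b : Under (⊤_ C)) :
    (⊤_ C : C) ⟶ (ihom a.right).obj b.right :=
  (ihomTermIso a.right).hom ≫ (ihom a.right).map b.hom

theorem basedHomPoint_w (a b : Under (⊤_ C)) :
    basedHomPointFst a b ≫ (pre a.hom).app b.right = 𝟙 (⊤_ C : C) ≫ pointLeg (⊤_ C : C) b := by
  rw [Category.id_comp]
  dsimp [basedHomPointFst, pointLeg, ihomTermIso]
  rw [Category.assoc, ← pre_comm_ihom_map, curry_natural_right, ← Category.assoc]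
  congr 1
  apply uncurry_injective
  exact Subsingleton.elim _ _

/-- The based hom object `hom_*(a, b)`: the pullback of `[a, b] ⟶ [t, b] ⟵ t`, pointed by
the induced morphism from `t`. -/
noncomputable def basedHom (a b : Under (⊤_ C)) : Under (⊤_ C) :=
  Under.mk (pullback.lift (basedHomPointFst a b) (𝟙 (⊤_ C : C)) (basedHomPoint_w a b))

theorem basedHomPointFst_map (a : Under (⊤_ C)) {x x' : Under (⊤_ C)} (g : x ⟶ x') :
    basedHomPointFst a x ≫ (ihom a.right).map g.right = basedHomPointFst a x' := by
  dsimp [basedHomPointFst]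
  rw [Category.assoc, ← Functor.map_comp, Under.w g]

theorem basedHomPointFst_pre {a a' : Under (⊤_ C)} (f : a ⟶ a') (x : Under (⊤_ C)) :
    basedHomPointFst a' x ≫ (pre f.right).app x.right = basedHomPointFst a x := by
  dsimp [basedHomPointFst]
  rw [Category.assoc, ← pre_comm_ihom_map, ← Category.assoc]
  congr 1
  exact hom_to_ihom_terminal_ext _ _

/-- Functoriality of the based hom object: contravariant in the first variable and
covariant in the second. -/
noncomputable def basedHomMap {a a' x x' : Under (⊤_ C)} (f : a ⟶ a') (g : x ⟶ x') :
    basedHom a' x ⟶ basedHom a x' :=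
  Under.homMk
    (pullback.map ((pre a'.hom).app x.right) (pointLeg (⊤_ C : C) x)
      ((pre a.hom).app x'.right) (pointLeg (⊤_ C : C) x')
      ((ihom a'.right).map g.right ≫ (pre f.right).app x'.right)
      (𝟙 (⊤_ C : C))
      ((ihom (⊤_ C : C)).map g.right)
      (by
        rw [Category.assoc, ← NatTrans.comp_app, ← MonoidalClosed.pre_map, Under.w f]
        exact pre_comm_ihom_map a'.hom g.right)
      (by
        rw [Category.id_comp]
        dsimp [pointLeg]
        rw [← curry_natural_right, Category.assoc, Under.w g]))
    (by
      dsimp [basedHom]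
      apply pullback.hom_ext
      · rw [Category.assoc, pullback.lift_fst, pullback.lift_fst_assoc, ← Category.assoc,
          basedHomPointFst_map, basedHomPointFst_pre, pullback.lift_fst]
      · rw [Category.assoc, pullback.lift_snd, pullback.lift_snd, Category.comp_id,
          pullback.lift_snd])

section Aux

theorem toTerminal_comp_eq {Z W : C} (h k : Z ⟶ (⊤_ C : C)) (f : (⊤_ C : C) ⟶ W) :
    h ≫ f = k ≫ f := by rw [Subsingleton.elim h k]

theorem uncurry_comp_pre {A B X Y : C} (f : A ⟶ B) (g : Y ⟶ (ihom B).obj X) :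
    uncurry (g ≫ (pre f).app X) = (f ▷ Y) ≫ uncurry g := by
  rw [uncurry_eq, uncurry_eq, MonoidalCategory.whiskerLeft_comp, Category.assoc,
    id_tensor_pre_app_comp_ev, whisker_exchange_assoc]

theorem uncurry_comp_pointLeg {X Y : C} (x : Under (⊤_ C)) (g : Y ⟶ (⊤_ C : C)) :
    uncurry (g ≫ pointLeg X x) = terminal.from (X ⊗ Y) ≫ x.hom := by
  dsimp [pointLeg]
  rw [uncurry_natural_left, uncurry_curry, ← Category.assoc]
  exact toTerminal_comp_eq _ _ _

theorem uncurry_comp_basedHomPointFst {Y : C} (g : Y ⟶ (⊤_ C : C)) (b c : Under (⊤_ C)) :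
    uncurry (g ≫ basedHomPointFst b c) = terminal.from (b.right ⊗ Y) ≫ c.hom := by
  dsimp [basedHomPointFst, ihomTermIso]
  rw [← Category.assoc, uncurry_natural_right, uncurry_natural_left, uncurry_curry]
  exact toTerminal_comp_eq _ _ _

theorem ihom_coprod_hom_ext {X₁ X₂ Z W : C} {h k : Z ⟶ (ihom (X₁ ⨿ X₂)).obj W}
    (h₁ : (coprod.inl ▷ Z) ≫ uncurry h = (coprod.inl ▷ Z) ≫ uncurry k)
    (h₂ : (coprod.inr ▷ Z) ≫ uncurry h = (coprod.inr ▷ Z) ≫ uncurry k) : h = k := by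
  apply uncurry_injective
  have key : curry ((β_ Z (X₁ ⨿ X₂)).hom ≫ uncurry h) =
      curry ((β_ Z (X₁ ⨿ X₂)).hom ≫ uncurry k) := by
    apply coprod.hom_ext
    · rw [← curry_natural_left, ← curry_natural_left,
        BraidedCategory.braiding_naturality_right_assoc,
        BraidedCategory.braiding_naturality_right_assoc, h₁]
    · rw [← curry_natural_left, ← curry_natural_left,
        BraidedCategory.braiding_naturality_right_assoc,
        BraidedCategory.braiding_naturality_right_assoc, h₂]
  have := curry_injective key
  rwa [cancel_epi] at this

/-- The first projection of the inner pullback defining `basedHom b c`. -/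
noncomputable def innerFst (b c : Under (⊤_ C)) :
    (basedHom b c).right ⟶ (ihom b.right).obj c.right :=
  pullback.fst ((pre b.hom).app c.right) (pointLeg (⊤_ C) c)

/-- The first projection of the outer pullback defining `basedHom a (basedHom b c)`. -/
noncomputable def outerFst (a b c : Under (⊤_ C)) :
    (basedHom a (basedHom b c)).right ⟶ (ihom a.right).obj (basedHom b c).right :=
  pullback.fst ((pre a.hom).app (basedHom b c).right) (pointLeg (⊤_ C) (basedHom b c))

/-- The doubly uncurried structure morphism `b ⊗ (a ⊗ hom_*(a, hom_*(b,c))) ⟶ c`. -/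
noncomputable def bigHat (a b c : Under (⊤_ C)) :
    b.right ⊗ (a.right ⊗ (basedHom a (basedHom b c)).right) ⟶ c.right :=
  uncurry (uncurry (outerFst a b c) ≫ innerFst b c)

/-- The comparison morphism `hom_*(a, hom_*(b,c)) ⟶ [a ⊗ b, c]`. -/
noncomputable def P1 (a b c : Under (⊤_ C)) :
    (basedHom a (basedHom b c)).right ⟶ (ihom (a.right ⊗ b.right)).obj c.right :=
  curry (((β_ a.right b.right).hom ▷ (basedHom a (basedHom b c)).right) ≫
    (α_ b.right a.right (basedHom a (basedHom b c)).right).hom ≫ bigHat a b c)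

theorem point_comp_innerFst (b c : Under (⊤_ C)) :
    (basedHom b c).hom ≫ innerFst b c = basedHomPointFst b c := by
  dsimp [basedHom, innerFst]
  exact pullback.lift_fst _ _ _

theorem bigHat_left (a b c : Under (⊤_ C)) :
    b.hom ▷ (a.right ⊗ (basedHom a (basedHom b c)).right) ≫ bigHat a b c =
      terminal.from _ ≫ c.hom := by
  dsimp [bigHat, innerFst, outerFst]
  erw [← uncurry_comp_pre, Category.assoc, pullback.condition, ← Category.assoc,
    uncurry_comp_pointLeg]

theorem bigHat_middle (a b c : Under (⊤_ C)) :
    b.right ◁ (a.hom ▷ (basedHom a (basedHom b c)).right) ≫ bigHat a b c =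
      terminal.from _ ≫ c.hom := by
  have h1 : a.hom ▷ (basedHom a (basedHom b c)).right ≫ uncurry (outerFst a b c) =
      terminal.from _ ≫ (basedHom b c).hom := by
    dsimp [outerFst]
    erw [← uncurry_comp_pre, pullback.condition, uncurry_comp_pointLeg]
  dsimp [bigHat]
  rw [← uncurry_natural_left, ← Category.assoc, h1, Category.assoc, point_comp_innerFst,
    uncurry_comp_basedHomPointFst]

theorem P1_w (a b c : Under (⊤_ C)) :
    P1 a b c ≫ (pre (wedgeMap a b)).app c.right =
      terminal.from _ ≫ pointLeg (wedgeObj a b) c := by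
  dsimp only [wedgeObj]
  apply ihom_coprod_hom_ext (X₁ := a.right ⊗ (⊤_ C : C)) (X₂ := (⊤_ C : C) ⊗ b.right)
  · erw [uncurry_comp_pre, uncurry_comp_pointLeg]
    dsimp only [P1]
    rw [uncurry_curry]
    erw [← comp_whiskerRight_assoc]
    dsimp only [wedgeMap]
    rw [coprod.inl_desc, ← comp_whiskerRight_assoc, BraidedCategory.braiding_naturality_right,
      comp_whiskerRight, Category.assoc, associator_naturality_left_assoc, bigHat_left]
    simp only [← Category.assoc]
    exact toTerminal_comp_eq _ _ _
  · erw [uncurry_comp_pre, uncurry_comp_pointLeg]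
    dsimp only [P1]
    rw [uncurry_curry]
    erw [← comp_whiskerRight_assoc]
    dsimp only [wedgeMap]
    rw [coprod.inr_desc]
    rw [← comp_whiskerRight_assoc, BraidedCategory.braiding_naturality_left,
      comp_whiskerRight, Category.assoc, associator_naturality_middle_assoc, bigHat_middle]
    simp only [← Category.assoc]
    exact toTerminal_comp_eq _ _ _

theorem comp_P1 (a b c : Under (⊤_ C)) {X : C}
    (m : X ⟶ (basedHom a (basedHom b c)).right) :
    uncurry (m ≫ P1 a b c) =
      ((β_ a.right b.right).hom ▷ X) ≫ (α_ b.right a.right X).hom ≫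
        uncurry (uncurry (m ≫ outerFst a b c) ≫ innerFst b c) := by
  rw [uncurry_natural_left m (P1 a b c),
    uncurry_natural_left (uncurry (m ≫ outerFst a b c)) (innerFst b c),
    uncurry_natural_left m (outerFst a b c)]
  dsimp only [P1, bigHat]
  rw [uncurry_curry, uncurry_natural_left (uncurry (outerFst a b c)) (innerFst b c)]
  simp only [Category.assoc, MonoidalCategory.whiskerLeft_comp, whisker_exchange_assoc,
    associator_naturality_right_assoc]

/-- The double transpose of a morphism into `[a ⊗ b, c]`. -/
noncomputable def sHat (a b c : Under (⊤_ C)) {X : C}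
    (f : X ⟶ (ihom (a.right ⊗ b.right)).obj c.right) :
    b.right ⊗ (a.right ⊗ X) ⟶ c.right :=
  (α_ b.right a.right X).inv ≫ ((β_ b.right a.right).hom ▷ X) ≫ uncurry f

theorem beta_alpha_sHat (a b c : Under (⊤_ C)) {X : C}
    (f : X ⟶ (ihom (a.right ⊗ b.right)).obj c.right) :
    ((β_ a.right b.right).hom ▷ X) ≫ (α_ b.right a.right X).hom ≫ sHat a b c f =
      uncurry f := by
  dsimp [sHat]
  rw [Iso.hom_inv_id_assoc, ← comp_whiskerRight_assoc, SymmetricCategory.symmetry,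
    MonoidalCategory.id_whiskerRight, Category.id_comp]

variable {X : C}

theorem cone_wedge (a b c : Under (⊤_ C))
    (f : X ⟶ (ihom (a.right ⊗ b.right)).obj c.right)
    (hf : f ≫ (pre (wedgeMap a b)).app c.right =
      terminal.from X ≫ pointLeg (wedgeObj a b) c) :
    (wedgeMap a b ▷ X) ≫ uncurry f = terminal.from _ ≫ c.hom := by
  rw [← uncurry_comp_pre, hf, uncurry_comp_pointLeg]

theorem sHat_left (a b c : Under (⊤_ C))
    (f : X ⟶ (ihom (a.right ⊗ b.right)).obj c.right)
    (hf : f ≫ (pre (wedgeMap a b)).app c.right =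
      terminal.from X ≫ pointLeg (wedgeObj a b) c) :
    (b.hom ▷ (a.right ⊗ X)) ≫ sHat a b c f = terminal.from _ ≫ c.hom := by
  have hl : ((a.right ◁ b.hom) ▷ X) ≫ uncurry f = terminal.from _ ≫ c.hom := by
    have h1 : ((a.right ◁ b.hom) ▷ X) ≫ uncurry f =
        ((coprod.inl : _ ⟶ wedgeObj a b) ▷ X) ≫ (wedgeMap a b ▷ X) ≫ uncurry f := by
      erw [← comp_whiskerRight_assoc]
      dsimp only [wedgeMap]
      rw [coprod.inl_desc]
    erw [h1, cone_wedge a b c f hf, ← Category.assoc]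
    exact toTerminal_comp_eq _ _ _
  dsimp only [sHat, Functor.id_obj, Functor.const_obj_obj]
  rw [associator_inv_naturality_left_assoc, ← comp_whiskerRight_assoc,
    BraidedCategory.braiding_naturality_left, comp_whiskerRight, Category.assoc, hl]
  simp only [← Category.assoc]
  exact toTerminal_comp_eq _ _ _

theorem sHat_middle (a b c : Under (⊤_ C))
    (f : X ⟶ (ihom (a.right ⊗ b.right)).obj c.right)
    (hf : f ≫ (pre (wedgeMap a b)).app c.right =
      terminal.from X ≫ pointLeg (wedgeObj a b) c) :
    (b.right ◁ (a.hom ▷ X)) ≫ sHat a b c f = terminal.from _ ≫ c.hom := by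
  have hr : ((a.hom ▷ b.right) ▷ X) ≫ uncurry f = terminal.from _ ≫ c.hom := by
    have h1 : ((a.hom ▷ b.right) ▷ X) ≫ uncurry f =
        ((coprod.inr : _ ⟶ wedgeObj a b) ▷ X) ≫ (wedgeMap a b ▷ X) ≫ uncurry f := by
      erw [← comp_whiskerRight_assoc]
      dsimp only [wedgeMap]
      rw [coprod.inr_desc]
    erw [h1, cone_wedge a b c f hf, ← Category.assoc]
    exact toTerminal_comp_eq _ _ _
  dsimp only [sHat, Functor.id_obj, Functor.const_obj_obj]
  rw [associator_inv_naturality_middle_assoc, ← comp_whiskerRight_assoc,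
    BraidedCategory.braiding_naturality_right, comp_whiskerRight, Category.assoc, hr]
  simp only [← Category.assoc]
  exact toTerminal_comp_eq _ _ _

/-- The inner factorization `a ⊗ X ⟶ hom_*(b, c)`. -/
noncomputable def liftInner (a b c : Under (⊤_ C))
    (f : X ⟶ (ihom (a.right ⊗ b.right)).obj c.right)
    (hf : f ≫ (pre (wedgeMap a b)).app c.right =
      terminal.from X ≫ pointLeg (wedgeObj a b) c) :
    a.right ⊗ X ⟶ (basedHom b c).right :=
  pullback.lift (curry (sHat a b c f)) (terminal.from _) (by
    apply uncurry_injective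
    rw [uncurry_comp_pre, uncurry_comp_pointLeg, uncurry_curry]
    exact sHat_left a b c f hf)

theorem liftInner_fst (a b c : Under (⊤_ C))
    (f : X ⟶ (ihom (a.right ⊗ b.right)).obj c.right)
    (hf : f ≫ (pre (wedgeMap a b)).app c.right =
      terminal.from X ≫ pointLeg (wedgeObj a b) c) :
    liftInner a b c f hf ≫ innerFst b c = curry (sHat a b c f) := by
  dsimp only [liftInner, innerFst]
  exact pullback.lift_fst _ _ _

/-- The outer factorization `X ⟶ hom_*(a, hom_*(b, c))`. -/
noncomputable def liftOuter (a b c : Under (⊤_ C))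
    (f : X ⟶ (ihom (a.right ⊗ b.right)).obj c.right)
    (hf : f ≫ (pre (wedgeMap a b)).app c.right =
      terminal.from X ≫ pointLeg (wedgeObj a b) c) :
    X ⟶ (basedHom a (basedHom b c)).right :=
  pullback.lift (curry (liftInner a b c f hf)) (terminal.from X) (by
    apply uncurry_injective
    rw [uncurry_comp_pre, uncurry_comp_pointLeg, uncurry_curry]
    apply pullback.hom_ext
    · erw [Category.assoc, Category.assoc]
      have h1 : liftInner a b c f hf ≫
          pullback.fst ((pre b.hom).app c.right) (pointLeg (⊤_ C) c) =
          curry (sHat a b c f) := liftInner_fst a b c f hf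
      erw [h1]
      have h2 : (basedHom b c).hom ≫
          pullback.fst ((pre b.hom).app c.right) (pointLeg (⊤_ C) c) =
          basedHomPointFst b c := point_comp_innerFst b c
      erw [h2]
      apply uncurry_injective
      rw [uncurry_natural_left, uncurry_curry, uncurry_comp_basedHomPointFst]
      exact sHat_middle a b c f hf
    · exact Subsingleton.elim _ _)

theorem liftOuter_fst (a b c : Under (⊤_ C))
    (f : X ⟶ (ihom (a.right ⊗ b.right)).obj c.right)
    (hf : f ≫ (pre (wedgeMap a b)).app c.right =
      terminal.from X ≫ pointLeg (wedgeObj a b) c) :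
    liftOuter a b c f hf ≫ outerFst a b c = curry (liftInner a b c f hf) := by
  dsimp only [liftOuter, outerFst]
  exact pullback.lift_fst _ _ _

end Aux

/-- For pointed objects `a`, `b`, `c`, the iterated based hom object
`hom_*(a, hom_*(b, c))` is a pullback of the cospan
`[a ⊗ b, c] ⟶ [(a ⊗ t) ⨿ (t ⊗ b), c] ⟵ t`, where the first leg is induced by the canonical
morphism `(a ⊗ t) ⨿ (t ⊗ b) ⟶ a ⊗ b` and the second leg is adjoint to the morphism
`((a ⊗ t) ⨿ (t ⊗ b)) ⊗ t ⟶ c` factoring through `t` followed by the basepoint of `c`. -/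
theorem basedHom_basedHom_isPullback (a b c : Under (⊤_ C)) :
    ∃ (p₁ : (basedHom a (basedHom b c)).right ⟶ (ihom (a.right ⊗ b.right)).obj c.right)
      (p₂ : (basedHom a (basedHom b c)).right ⟶ (⊤_ C : C))
      (w : p₁ ≫ (pre (wedgeMap a b)).app c.right = p₂ ≫ pointLeg (wedgeObj a b) c),
      Nonempty (IsLimit (PullbackCone.mk p₁ p₂ w)) := by
  refine ⟨P1 a b c, terminal.from _, P1_w a b c, ⟨?_⟩⟩
  refine PullbackCone.IsLimit.mk _
    (fun s => liftOuter a b c s.fst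
      (by rw [Subsingleton.elim (terminal.from s.pt) s.snd]; exact s.condition))
    (fun s => ?_) (fun s => Subsingleton.elim _ _) (fun s m hm₁ hm₂ => ?_)
  · -- fac_left
    apply uncurry_injective
    rw [comp_P1, liftOuter_fst, uncurry_curry, liftInner_fst, uncurry_curry,
      beta_alpha_sHat]
  · -- uniqueness
    have hcond : s.fst ≫ (pre (wedgeMap a b)).app c.right =
        terminal.from s.pt ≫ pointLeg (wedgeObj a b) c := by
      rw [Subsingleton.elim (terminal.from s.pt) s.snd]; exact s.condition
    have h := congrArg uncurry hm₁
    rw [comp_P1] at h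
    apply pullback.hom_ext
    · have hfst : m ≫ outerFst a b c = curry (liftInner a b c s.fst hcond) := by
        apply uncurry_injective
        rw [uncurry_curry]
        apply pullback.hom_ext
        · have hfst2 : uncurry (m ≫ outerFst a b c) ≫ innerFst b c =
              curry (sHat a b c s.fst) := by
            apply uncurry_injective
            rw [uncurry_curry, ← cancel_epi (α_ b.right a.right s.pt).hom,
              ← cancel_epi ((β_ a.right b.right).hom ▷ s.pt), h, beta_alpha_sHat]
          have := hfst2.trans (liftInner_fst a b c s.fst hcond).symm
          dsimp only [innerFst] at this
          exact this
        · exact Subsingleton.elim _ _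
      have := hfst.trans (liftOuter_fst a b c s.fst hcond).symm
      dsimp only [outerFst] at this
      exact this
    · exact Subsingleton.elim _ _

end BasedObjects
end
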